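/- For any graph G on n nodes with maximum degree Δ and strict majority thresholds, every timed target set in the non-progressive threshold model has size at least 2n/(Δ+1). -/
import Mathlib


open Finset
open scoped Classical

variable {V : Type*}

noncomputable def Qseq (G : SimpleGraph V) [Fintype V] (τ : V → ℕ) (S : ℕ → Finset V) :
    ℕ → Finset V
  | 0 => ∅
  | i + 1 => Finset.univ.filter fun v =>
      τ v ≤ (G.neighborFinset v ∩ (S i ∪ Qseq G τ S i)).card

def IsTTS (G : SimpleGraph V) [Fintype V] (τ : V → ℕ) (S : ℕ → Finset V) (k : ℕ) : Prop :=
  S k = ∅ ∧ Qseq G τ S k = Finset.univ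

def ttsSize (S : ℕ → Finset V) (k : ℕ) : ℕ := ∑ i ∈ Finset.range (k + 1), (S i).card

noncomputable def strictMaj (G : SimpleGraph V) [Fintype V] (v : V) : ℕ := (G.degree v + 2) / 2

noncomputable def npStep (G : SimpleGraph V) [Fintype V] (τ : V → ℕ) (A : Finset V) : Finset V :=
  Finset.univ.filter fun v => τ v ≤ (G.neighborFinset v ∩ A).card

def IsTS (G : SimpleGraph V) [Fintype V] (τ : V → ℕ) (S : Finset V) : Prop :=
  ∃ i : ℕ, (npStep G τ)^[i] S = Finset.univ

noncomputable def MTT (G : SimpleGraph V) [Fintype V] (τ : V → ℕ) : ℕ :=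
  sInf {m | ∃ (S : ℕ → Finset V) (k : ℕ), IsTTS G τ S k ∧ ttsSize S k = m}

/-! ### Auxiliary development for the lower bound -/

/-- Double counting helper: expand the cardinality of `N(v) ∩ A` as a sum of indicators. -/
private lemma dc_aux [Fintype V] (G : SimpleGraph V) (A B : Finset V) :
    ∑ v ∈ B, ((G.neighborFinset v ∩ A).card : ℤ)
      = ∑ v ∈ B, ∑ u ∈ A, (if G.Adj v u then (1 : ℤ) else 0) := by
  refine Finset.sum_congr rfl fun v _ => ?_
  have h : G.neighborFinset v ∩ A = A.filter (fun u => G.Adj v u) := by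
    ext u
    simp [SimpleGraph.mem_neighborFinset, and_comm]
  rw [Finset.sum_boole, h]

/-- Double counting: `∑_{v ∈ B} |N(v) ∩ A| = ∑_{v ∈ A} |N(v) ∩ B|`. -/
private lemma dc [Fintype V] (G : SimpleGraph V) (A B : Finset V) :
    ∑ v ∈ B, ((G.neighborFinset v ∩ A).card : ℤ)
      = ∑ v ∈ A, ((G.neighborFinset v ∩ B).card : ℤ) := by
  rw [dc_aux, dc_aux, Finset.sum_comm]
  refine Finset.sum_congr rfl fun v _ => Finset.sum_congr rfl fun u _ => ?_
  simp [SimpleGraph.adj_comm]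

section main

variable [Fintype V] (G : SimpleGraph V) (S : ℕ → Finset V)

/-- `X i = S i ∪ Q i`, the set of nodes that are either seeded or active at time `i`. -/
private noncomputable def Xset (i : ℕ) : Finset V := S i ∪ Qseq G (strictMaj G) S i

/-- The local energy contribution `θ(v) - 2 |N(v) ∩ X i|` with `θ(v) = deg v + 1`. -/
private noncomputable def gfun (i : ℕ) (v : V) : ℤ :=
  ((G.degree v : ℤ) + 1) - 2 * ((G.neighborFinset v ∩ Xset G S i).card : ℤ)

/-- The Goles-type energy of the configuration pair `(X i, X (i+1))`. -/
private noncomputable def Ffun (i : ℕ) : ℤ :=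
  (∑ v ∈ Xset G S i, ((G.degree v : ℤ) + 1)) + ∑ v ∈ Xset G S (i + 1), gfun G S i v

private lemma memQ (i : ℕ) (v : V) :
    v ∈ Qseq G (strictMaj G) S (i + 1) ↔
      strictMaj G v ≤ (G.neighborFinset v ∩ Xset G S i).card := by
  simp [Qseq, Xset]

/-- On newly active nodes the local energy is nonpositive. -/
private lemma gQ {i : ℕ} {v : V} (hv : v ∈ Qseq G (strictMaj G) S (i + 1)) :
    gfun G S i v ≤ 0 := by
  rw [memQ] at hv
  unfold strictMaj at hv
  have h : G.degree v + 1 ≤ 2 * (G.neighborFinset v ∩ Xset G S i).card := by omega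
  unfold gfun
  push_cast at h
  linarith

/-- On inactive nodes the local energy is nonnegative. -/
private lemma gnotQ {i : ℕ} {v : V} (hv : v ∉ Qseq G (strictMaj G) S (i + 1)) :
    0 ≤ gfun G S i v := by
  rw [memQ] at hv
  unfold strictMaj at hv
  push_neg at hv
  have h : 2 * (G.neighborFinset v ∩ Xset G S i).card ≤ G.degree v := by omega
  unfold gfun
  push_cast at h
  linarith

private lemma gle (i : ℕ) (v : V) : gfun G S i v ≤ (G.maxDegree : ℤ) + 1 := by
  have h1 : G.degree v ≤ G.maxDegree := G.degree_le_maxDegree v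
  have h2 : (0 : ℤ) ≤ ((G.neighborFinset v ∩ Xset G S i).card : ℤ) := by positivity
  have h3 : (G.degree v : ℤ) ≤ (G.maxDegree : ℤ) := by exact_mod_cast h1
  unfold gfun
  linarith

/-- The local energy summed over any set of seeded-or-active nodes is bounded by the
seed contribution. -/
private lemma sumg (i : ℕ) (A : Finset V) (hA : A ⊆ Xset G S (i + 1)) :
    ∑ v ∈ A, gfun G S i v ≤ ((G.maxDegree : ℤ) + 1) * ((S (i + 1)).card : ℤ) := by
  have hsplit : (∑ v ∈ A ∩ S (i + 1), gfun G S i v) + ∑ v ∈ A \ S (i + 1), gfun G S i v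
      = ∑ v ∈ A, gfun G S i v := Finset.sum_inter_add_sum_sdiff A (S (i + 1)) _
  have h1 : ∑ v ∈ A \ S (i + 1), gfun G S i v ≤ 0 := by
    refine Finset.sum_nonpos fun v hv => ?_
    have hvA := Finset.mem_sdiff.mp hv
    have hvX := hA hvA.1
    have hvQ : v ∈ Qseq G (strictMaj G) S (i + 1) := by
      rcases Finset.mem_union.mp hvX with h | h
      · exact absurd h hvA.2
      · exact h
    exact gQ G S hvQ
  have h2 : ∑ v ∈ A ∩ S (i + 1), gfun G S i v
      ≤ ((G.maxDegree : ℤ) + 1) * ((S (i + 1)).card : ℤ) := by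
    calc ∑ v ∈ A ∩ S (i + 1), gfun G S i v
        ≤ ∑ _v ∈ A ∩ S (i + 1), ((G.maxDegree : ℤ) + 1) :=
          Finset.sum_le_sum fun v _ => gle G S i v
      _ = ((A ∩ S (i + 1)).card : ℤ) * ((G.maxDegree : ℤ) + 1) := by
          rw [Finset.sum_const]; ring
      _ ≤ ((G.maxDegree : ℤ) + 1) * ((S (i + 1)).card : ℤ) := by
          have hc : ((A ∩ S (i + 1)).card : ℤ) ≤ ((S (i + 1)).card : ℤ) := by
            exact_mod_cast Finset.card_le_card (Finset.inter_subset_right)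
          have hD : (0 : ℤ) ≤ (G.maxDegree : ℤ) + 1 := by positivity
          nlinarith [hc, hD]
  linarith

/-- One step of the energy telescoping: the energy increases by at most the seed cost. -/
private lemma Fstep (i : ℕ) :
    Ffun G S (i + 1) ≤ Ffun G S i + ((G.maxDegree : ℤ) + 1) * ((S (i + 2)).card : ℤ) := by
  have hid : Ffun G S (i + 1) + ∑ v ∈ Xset G S i, gfun G S (i + 1) v
      = Ffun G S i + ∑ v ∈ Xset G S (i + 2), gfun G S (i + 1) v := by
    unfold Ffun gfun
    have hdc := dc G (Xset G S (i + 1)) (Xset G S i)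
    simp only [Finset.sum_sub_distrib, ← Finset.mul_sum, show i + 1 + 1 = i + 2 from rfl]
    linarith [hdc]
  have e1 : (∑ v ∈ Xset G S (i + 2) ∩ Xset G S i, gfun G S (i + 1) v)
      + ∑ v ∈ Xset G S (i + 2) \ Xset G S i, gfun G S (i + 1) v
      = ∑ v ∈ Xset G S (i + 2), gfun G S (i + 1) v :=
    Finset.sum_inter_add_sum_sdiff _ _ _
  have e2 : (∑ v ∈ Xset G S i ∩ Xset G S (i + 2), gfun G S (i + 1) v)
      + ∑ v ∈ Xset G S i \ Xset G S (i + 2), gfun G S (i + 1) v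
      = ∑ v ∈ Xset G S i, gfun G S (i + 1) v :=
    Finset.sum_inter_add_sum_sdiff _ _ _
  have e3 : Xset G S (i + 2) ∩ Xset G S i = Xset G S i ∩ Xset G S (i + 2) := by
    rw [Finset.inter_comm]
  have h3 : ∑ v ∈ Xset G S (i + 2) \ Xset G S i, gfun G S (i + 1) v
      ≤ ((G.maxDegree : ℤ) + 1) * ((S (i + 2)).card : ℤ) := by
    have := sumg G S (i + 1) (Xset G S (i + 2) \ Xset G S i)
      (by rw [show i + 1 + 1 = i + 2 from rfl]; exact Finset.sdiff_subset)
    rwa [show i + 1 + 1 = i + 2 from rfl] at this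
  have h4 : 0 ≤ ∑ v ∈ Xset G S i \ Xset G S (i + 2), gfun G S (i + 1) v := by
    refine Finset.sum_nonneg fun v hv => ?_
    have hvn : v ∉ Xset G S (i + 2) := (Finset.mem_sdiff.mp hv).2
    have hvQ : v ∉ Qseq G (strictMaj G) S (i + 2) := fun hq =>
      hvn (Finset.mem_union_right _ hq)
    exact gnotQ G S hvQ
  rw [e3] at e1
  linarith

/-- Initial energy bound. -/
private lemma F0 : Ffun G S 0 ≤ ((G.maxDegree : ℤ) + 1) * (((S 0).card : ℤ) + ((S 1).card : ℤ)) := by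
  have hX0 : Xset G S 0 = S 0 := by
    unfold Xset
    rw [show Qseq G (strictMaj G) S 0 = ∅ from rfl, Finset.union_empty]
  have h1 : ∑ v ∈ Xset G S 0, ((G.degree v : ℤ) + 1)
      ≤ ((G.maxDegree : ℤ) + 1) * ((S 0).card : ℤ) := by
    rw [hX0]
    calc ∑ v ∈ S 0, ((G.degree v : ℤ) + 1)
        ≤ ∑ _v ∈ S 0, ((G.maxDegree : ℤ) + 1) := by
          refine Finset.sum_le_sum fun v _ => ?_
          have : (G.degree v : ℤ) ≤ (G.maxDegree : ℤ) := by
            exact_mod_cast G.degree_le_maxDegree v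
          linarith
      _ = ((G.maxDegree : ℤ) + 1) * ((S 0).card : ℤ) := by
          rw [Finset.sum_const]; ring
  have h2 : ∑ v ∈ Xset G S 1, gfun G S 0 v
      ≤ ((G.maxDegree : ℤ) + 1) * ((S 1).card : ℤ) :=
    sumg G S 0 (Xset G S 1) (le_refl _)
  unfold Ffun
  linarith

/-- Telescoped energy bound. -/
private lemma Ftel (j : ℕ) :
    Ffun G S j ≤ Ffun G S 0
      + ((G.maxDegree : ℤ) + 1) * ∑ i ∈ Finset.range j, ((S (i + 2)).card : ℤ) := by
  induction j with
  | zero => simp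
  | succ j ih =>
    have h := Fstep G S j
    rw [Finset.sum_range_succ, mul_add]
    linarith

/-- Final energy bound: at the moment of full activation the energy is at least `2n`. -/
private lemma Fend (j : ℕ) (h : Qseq G (strictMaj G) S (j + 1) = Finset.univ) :
    2 * (Fintype.card V : ℤ) ≤ Ffun G S j := by
  have hX1 : Xset G S (j + 1) = Finset.univ := by
    unfold Xset; rw [h]; simp
  have hdeg : ∀ v : V, 1 ≤ G.degree v := by
    intro v
    have hv : v ∈ Qseq G (strictMaj G) S (j + 1) := h ▸ Finset.mem_univ v
    rw [memQ] at hv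
    unfold strictMaj at hv
    have hc : (G.neighborFinset v ∩ Xset G S j).card ≤ G.degree v := by
      calc (G.neighborFinset v ∩ Xset G S j).card
          ≤ (G.neighborFinset v).card := Finset.card_le_card Finset.inter_subset_left
        _ = G.degree v := G.card_neighborFinset_eq_degree v
    omega
  -- rewrite the energy
  have hdc := dc G (Xset G S j) (Finset.univ : Finset V)
  have hu : ∑ v ∈ Xset G S j, ((G.neighborFinset v ∩ (Finset.univ : Finset V)).card : ℤ)
      = ∑ v ∈ Xset G S j, (G.degree v : ℤ) := by
    refine Finset.sum_congr rfl fun v _ => ?_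
    rw [Finset.inter_univ]
    exact_mod_cast congrArg (Nat.cast : ℕ → ℤ) (G.card_neighborFinset_eq_degree v)
  rw [hu] at hdc
  have hmono : ∑ v ∈ Xset G S j, ((G.degree v : ℤ) - 1)
      ≤ ∑ v : V, ((G.degree v : ℤ) - 1) := by
    refine Finset.sum_le_sum_of_subset_of_nonneg (Finset.subset_univ _) fun v _ _ => ?_
    have h1 := hdeg v
    have : (1 : ℤ) ≤ (G.degree v : ℤ) := by exact_mod_cast h1
    linarith
  have hcardV : ∑ v : V, (1 : ℤ) = (Fintype.card V : ℤ) := by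
    rw [Finset.sum_const]; simp
  unfold Ffun gfun
  rw [hX1]
  simp only [Finset.sum_sub_distrib, Finset.sum_add_distrib, ← Finset.mul_sum]
  simp only [Finset.sum_sub_distrib] at hmono
  linarith [hdc, hmono, hcardV]

end main

/-- Theorem 4: For any graph `G` on `n` nodes with maximum degree `Δ` and
strict majority thresholds, every timed target set has size at least `2n/(Δ+1)`,
i.e. `2n ≤ size ⬝ (Δ+1)`. -/
theorem stmt6 [Fintype V] (G : SimpleGraph V)
    (S : ℕ → Finset V) (k : ℕ) (hS : IsTTS G (strictMaj G) S k) :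
    2 * Fintype.card V ≤ ttsSize S k * (G.maxDegree + 1) := by
  obtain ⟨hSk, hQk⟩ := hS
  cases k with
  | zero =>
    have : (∅ : Finset V) = Finset.univ := hQk
    have hcard : Fintype.card V = 0 := by
      rw [← Finset.card_univ, ← this, Finset.card_empty]
    simp [hcard]
  | succ j =>
    have hend := Fend G S j hQk
    have htel := Ftel G S j
    have h0 := F0 G S
    -- sum reindexing
    have hsum : (ttsSize S (j + 1) : ℤ)
        = ((S 0).card : ℤ) + ((S 1).card : ℤ)
          + ∑ i ∈ Finset.range j, ((S (i + 2)).card : ℤ) := by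
      unfold ttsSize
      push_cast
      rw [Finset.sum_range_succ' (fun i => ((S i).card : ℤ)) (j + 1),
        Finset.sum_range_succ' (fun i => ((S (i + 1)).card : ℤ)) j]
      ring
    have hkey : 2 * (Fintype.card V : ℤ)
        ≤ ((G.maxDegree : ℤ) + 1) * (ttsSize S (j + 1) : ℤ) := by
      rw [hsum, mul_add]
      linarith
    have : 2 * (Fintype.card V : ℤ) ≤ (ttsSize S (j + 1) : ℤ) * ((G.maxDegree : ℤ) + 1) := by
      linarith [hkey]
    exact_mod_cast this
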